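/- Let Z, {R_i}_{i∈I} be subsets of a manifold N, let P_cs : N → ℝ^{d_cs} and let 𝔠 = (P_s, P_c) be a (d_s, d_c)-splitting of ℝ^{d_cs} (so 𝔠 is a diffeomorphism onto its image and d_cs = d_s + d_c). Assume: (a) for every i ∈ I, P_cs(R_i) is a 𝔠-rectangle and P_s(P_cs(Z))‾ ⊆ int(P_s∘P_cs(R_i)); (b) {int(P_c∘P_cs(R_i))}_{i∈I} covers the closure of P_c∘P_cs(Z), with Lebesgue number Δ. Then for every set K ⊆ closure(P_cs(Z)) with diam(P_c(K)) < Δ there exists i ∈ I with K ⊆ int(P_cs(R_i)). -/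

import Mathlib

/-- `R` is an `(P,Q)`-rectangle: `(P,Q)` maps `R` bijectively onto `P(R) × Q(R)`. -/
def IsRectangle {E F G : Type*} (P : E → F) (Q : E → G) (R : Set E) : Prop :=
  Set.InjOn (fun x => (P x, Q x)) R ∧
    (fun x => (P x, Q x)) '' R = (P '' R) ×ˢ (Q '' R)

/-- Covering lemma for split blending machines: if each `P_cs(R_i)` is a
`𝔠 = (P_s,P_c)`-rectangle with `closure (P_s∘P_cs(Z)) ⊆ int (P_s∘P_cs(R_i))`, and the
central projections `{int (P_c∘P_cs(R_i))}` cover `closure (P_c∘P_cs(Z))` with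
Lebesgue number `Δ`, then every `K ⊆ closure (P_cs(Z))` with `diam (P_c(K)) < Δ` is
contained in `int (P_cs(R_i))` for some `i`. -/
theorem stmt9 {E : Type*} {ι : Type*} [Finite ι] [Nonempty ι]
    (dcs ds dc : ℕ)
    (Pcs : E → (Fin dcs → ℝ))
    (Ps : (Fin dcs → ℝ) → (Fin ds → ℝ)) (Pc : (Fin dcs → ℝ) → (Fin dc → ℝ))
    (hc_cont : Continuous (fun x => (Ps x, Pc x)))
    (hc_inj : Function.Injective (fun x => (Ps x, Pc x)))
    (hc_open : IsOpenMap (fun x => (Ps x, Pc x)))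
    (Z : Set E) (R : ι → Set E) (Δ : ℝ) (hΔpos : 0 < Δ)
    (hrect : ∀ i, IsRectangle Ps Pc (Pcs '' R i))
    (hbm3 : ∀ i, closure (Ps '' (Pcs '' Z)) ⊆ interior (Ps '' (Pcs '' R i)))
    (hcover : closure (Pc '' (Pcs '' Z)) ⊆ ⋃ i, interior (Pc '' (Pcs '' R i)))
    (hLeb : ∀ K : Set (Fin dc → ℝ), K ⊆ closure (Pc '' (Pcs '' Z)) →
      Metric.diam K < Δ → ∃ i, K ⊆ interior (Pc '' (Pcs '' R i))) :
    ∀ K : Set (Fin dcs → ℝ), K ⊆ closure (Pcs '' Z) →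
      Metric.diam (Pc '' K) < Δ → ∃ i, K ⊆ interior (Pcs '' R i) := by
  intro K hKsub hKdiam
  have hPsc : Continuous Ps := hc_cont.fst
  have hPcc : Continuous Pc := hc_cont.snd
  have hPcK : Pc '' K ⊆ closure (Pc '' (Pcs '' Z)) :=
    (Set.image_mono hKsub).trans (image_closure_subset_closure_image hPcc)
  obtain ⟨i, hi⟩ := hLeb (Pc '' K) hPcK hKdiam
  refine ⟨i, fun x hx => ?_⟩
  set S := Pcs '' R i with hS
  have hPs : Ps x ∈ interior (Ps '' S) :=
    hbm3 i (image_closure_subset_closure_image hPsc ⟨x, hKsub hx, rfl⟩)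
  have hPc : Pc x ∈ interior (Pc '' S) := hi ⟨x, hx, rfl⟩
  have hopen : IsOpen (interior (Ps '' S) ×ˢ interior (Pc '' S)) :=
    isOpen_interior.prod isOpen_interior
  have hsub : (fun x => (Ps x, Pc x)) ⁻¹'
      (interior (Ps '' S) ×ˢ interior (Pc '' S)) ⊆ S := by
    intro y hy
    have hmem : (Ps y, Pc y) ∈ (Ps '' S) ×ˢ (Pc '' S) :=
      ⟨interior_subset hy.1, interior_subset hy.2⟩
    rw [← (hrect i).2] at hmem
    obtain ⟨z, hz, hze⟩ := hmem
    rwa [← hc_inj hze]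
  exact interior_maximal hsub (hopen.preimage hc_cont) ⟨hPs, hPc⟩
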